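/- For any submodular function f on subsets of a finite ground set and any three subsets W_a, W_b, W_j: f(W_a ∪ W_b ∪ W_j) + f( (W_a ∩ W_b) ∪ (W_a ∩ W_j) ∪ (W_b ∩ W_j) ) ≤ f(W_j) − f(W_j ∩ W_a ∩ W_b) + f(W_a) + f(W_b). -/
import Mathlib

open Finset

/-- For any submodular, monotone nondecreasing `f` on subsets of a finite
ground set and any `Wa, Wb, Wj`:
`f(Wa ∪ Wb ∪ Wj) + f((Wa∩Wb) ∪ (Wa∩Wj) ∪ (Wb∩Wj)) ≤ f(Wj) − f(Wj∩Wa∩Wb) + f(Wa) + f(Wb)`. -/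
theorem extremal_inequality_two {γ : Type*} [DecidableEq γ] [Fintype γ]
    (f : Finset γ → ℝ)
    (hsub : ∀ A B : Finset γ, f (A ∪ B) + f (A ∩ B) ≤ f A + f B)
    (hmono : ∀ A B : Finset γ, A ⊆ B → f A ≤ f B)
    (Wa Wb Wj : Finset γ) :
    f (Wa ∪ Wb ∪ Wj) + f ((Wa ∩ Wb) ∪ (Wa ∩ Wj) ∪ (Wb ∩ Wj)) ≤
      f Wj - f (Wj ∩ Wa ∩ Wb) + f Wa + f Wb := by
  have h1 := hsub Wa Wb
  have h2 := hsub (Wa ∪ Wb) Wj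
  have h3 := hsub (Wa ∩ Wb) ((Wa ∪ Wb) ∩ Wj)
  have e1 : (Wa ∩ Wb) ∪ ((Wa ∪ Wb) ∩ Wj) = (Wa ∩ Wb) ∪ (Wa ∩ Wj) ∪ (Wb ∩ Wj) := by
    ext x; simp; tauto
  have e2 : (Wa ∩ Wb) ∩ ((Wa ∪ Wb) ∩ Wj) = Wj ∩ Wa ∩ Wb := by
    ext x; simp; tauto
  rw [e1, e2] at h3
  linarith
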